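/- Fix α ∈ ℝ. On ℝ³ define γ̃^i_k(A) = δ^i_k − α·Σ_l ε^{ilk}·A_l + α²·A_i·A_k and ρ̃^i_a(A) = (1/(1 + α²·Z₁))·(δ^i_a − α·Σ_k ε^{ika}·A_k), where Z₁ = A_1² + A_2² + A_3². Then ρ̃ satisfies the second master equation of the linear Poisson gauge theory with γ̃ at every A ∈ ℝ³: Σ_l (γ̃^j_l(A)·∂^l_A ρ̃^i_a(A) + ρ̃^l_a(A)·∂^i_A γ̃^j_l(A)) = 0 for all i,j,a. -/

import Mathlib

/-- The totally antisymmetric Levi-Civita symbol on three indices with `ε^{123} = 1`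
(here indices run over `Fin 3`, i.e. `ε 0 1 2 = 1`). -/
noncomputable def levicivita (i j k : Fin 3) : ℝ :=
  (((j : ℕ) : ℝ) - ((i : ℕ) : ℝ)) * (((k : ℕ) : ℝ) - ((j : ℕ) : ℝ))
    * (((k : ℕ) : ℝ) - ((i : ℕ) : ℝ)) / 2

/-- Partial derivative with respect to the `i`-th coordinate of a real-valued function
of `A`. -/
noncomputable def pd {N : ℕ} (i : Fin N) (g : (Fin N → ℝ) → ℝ) (A : Fin N → ℝ) : ℝ :=
  fderiv ℝ g A (Pi.single i 1)

lemma hasDerivAt_update' {N : ℕ} (A : Fin N → ℝ) (l : Fin N) (t : ℝ) :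
    HasDerivAt (fun s : ℝ => Function.update A l s) (Pi.single l 1) t := by
  have h := (hasFDerivAt_update (𝕜 := ℝ) A (i := l) t).hasDerivAt
  refine h.congr_deriv ?_
  ext k
  by_cases hk : k = l <;> simp [hk, Pi.single_apply]

lemma pd_eq {N : ℕ} (g : (Fin N → ℝ) → ℝ) (A : Fin N → ℝ) (l : Fin N) (V : ℝ)
    (hg : DifferentiableAt ℝ g A)
    (h : HasDerivAt (fun t => g (Function.update A l t)) V (A l)) : pd l g A = V := by
  have hu := hasDerivAt_update' A l (A l)
  have hgA : HasFDerivAt g (fderiv ℝ g A) (Function.update A l (A l)) := by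
    rw [Function.update_eq_self]; exact hg.hasFDerivAt
  have h2 : HasDerivAt (fun t => g (Function.update A l t)) (fderiv ℝ g A (Pi.single l 1))
      (A l) := hgA.comp_hasDerivAt (A l) hu
  exact h2.unique h

lemma hasDerivAt_coordif (A : Fin 3 → ℝ) (i k : Fin 3) (t : ℝ) :
    HasDerivAt (fun s : ℝ => if k = i then s else A k) (if k = i then 1 else 0) t := by
  split_ifs
  · exact hasDerivAt_id t
  · exact hasDerivAt_const t _

lemma coordif_eq (A : Fin 3 → ℝ) (i k : Fin 3) :
    (if k = i then A i else A k) = A k := by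
  split_ifs with h
  · rw [h]
  · rfl

lemma pd_rho (α c w0 w1 w2 : ℝ) (A : Fin 3 → ℝ) (l : Fin 3) :
    pd l (fun B : Fin 3 → ℝ => 1 / (1 + α ^ 2 * (B 0 ^ 2 + B 1 ^ 2 + B 2 ^ 2)) *
        (c - α * (w0 * B 0 + w1 * B 1 + w2 * B 2))) A =
      -(α ^ 2 * (2 * A 0 * (if (0 : Fin 3) = l then (1:ℝ) else 0)
            + 2 * A 1 * (if (1 : Fin 3) = l then (1:ℝ) else 0)
            + 2 * A 2 * (if (2 : Fin 3) = l then (1:ℝ) else 0)))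
          / (1 + α ^ 2 * (A 0 ^ 2 + A 1 ^ 2 + A 2 ^ 2)) ^ 2
          * (c - α * (w0 * A 0 + w1 * A 1 + w2 * A 2))
        + 1 / (1 + α ^ 2 * (A 0 ^ 2 + A 1 ^ 2 + A 2 ^ 2))
          * (-(α * (w0 * (if (0 : Fin 3) = l then (1:ℝ) else 0)
            + w1 * (if (1 : Fin 3) = l then (1:ℝ) else 0)
            + w2 * (if (2 : Fin 3) = l then (1:ℝ) else 0)))) := by
  have hD : (1 + α ^ 2 * (A 0 ^ 2 + A 1 ^ 2 + A 2 ^ 2)) ≠ 0 := by positivity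
  apply pd_eq
  · have hden : DifferentiableAt ℝ
        (fun B : Fin 3 → ℝ => 1 + α ^ 2 * (B 0 ^ 2 + B 1 ^ 2 + B 2 ^ 2)) A := by fun_prop
    have hnum : DifferentiableAt ℝ
        (fun B : Fin 3 → ℝ => c - α * (w0 * B 0 + w1 * B 1 + w2 * B 2)) A := by fun_prop
    have h1 : DifferentiableAt ℝ
        (fun B : Fin 3 → ℝ => (1 + α ^ 2 * (B 0 ^ 2 + B 1 ^ 2 + B 2 ^ 2))⁻¹) A :=
      hden.inv hD
    simp only [one_div]; exact h1.mul hnum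
  · simp only [Function.update_apply]
    have hc := fun k => hasDerivAt_coordif A l k (A l)
    have hne : (1 + α ^ 2 * ((if (0:Fin 3) = l then A l else A 0) ^ 2
        + (if (1:Fin 3) = l then A l else A 1) ^ 2
        + (if (2:Fin 3) = l then A l else A 2) ^ 2)) ≠ 0 := by
      simp only [coordif_eq]; exact hD
    have hden := ((((hc 0).pow 2).add ((hc 1).pow 2)).add ((hc 2).pow 2)).const_mul
      (α ^ 2) |>.const_add 1
    have hnum := ((((hc 0).const_mul w0).add ((hc 1).const_mul w1)).add
      ((hc 2).const_mul w2)).const_mul α |>.const_sub c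
    have h := ((hasDerivAt_const (A l) (1:ℝ)).div hden hne).mul hnum
    refine h.congr_deriv ?_
    simp only [Pi.add_apply, Pi.sub_apply, Pi.pow_apply, Pi.div_apply, Pi.mul_apply, coordif_eq]
    field_simp
    ring

lemma pd_gamma (α c w0 w1 w2 : ℝ) (j l : Fin 3) (A : Fin 3 → ℝ) (i : Fin 3) :
    pd i (fun B : Fin 3 → ℝ => c - α * (w0 * B 0 + w1 * B 1 + w2 * B 2)
        + α ^ 2 * B j * B l) A
      = -(α * (w0 * (if (0:Fin 3) = i then (1:ℝ) else 0)
            + w1 * (if (1:Fin 3) = i then (1:ℝ) else 0)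
            + w2 * (if (2:Fin 3) = i then (1:ℝ) else 0)))
        + α ^ 2 * ((if j = i then (1:ℝ) else 0) * A l + A j * (if l = i then (1:ℝ) else 0)) := by
  apply pd_eq
  · fun_prop
  · simp only [Function.update_apply]
    have hc := fun k => hasDerivAt_coordif A i k (A i)
    have h := (((((hc 0).const_mul w0).add ((hc 1).const_mul w1)).add
      ((hc 2).const_mul w2)).const_mul α).const_sub c |>.add
      (((hc j).const_mul (α ^ 2)).mul (hc l))
    refine h.congr_deriv ?_
    simp only [Pi.add_apply, Pi.sub_apply, Pi.pow_apply, Pi.div_apply, Pi.mul_apply, coordif_eq]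
    ring

set_option maxHeartbeats 8000000 in
/-- The alternative su(2) solutions
`γ̃^i_k(A) = δ^i_k − α Σ_l ε^{ilk} A_l + α² A_i A_k` and
`ρ̃^i_a(A) = (1/(1 + α² Z₁))(δ^i_a − α Σ_k ε^{ika} A_k)` (with `Z₁ = A₁² + A₂² + A₃²`)
satisfy the second master equation
`Σ_l (γ̃^j_l ∂^l_A ρ̃^i_a + ρ̃^l_a ∂^i_A γ̃^j_l) = 0` at every `A ∈ ℝ³`. -/
theorem su2_alternative_rho_second_master (α : ℝ)
    (γt : (Fin 3 → ℝ) → Fin 3 → Fin 3 → ℝ)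
    (hγt : ∀ A i k, γt A i k = (if i = k then 1 else 0)
        - α * ∑ l, levicivita i l k * A l + α ^ 2 * A i * A k)
    (ρt : (Fin 3 → ℝ) → Fin 3 → Fin 3 → ℝ)
    (hρt : ∀ A i a, ρt A i a = (1 / (1 + α ^ 2 * ((A 0) ^ 2 + (A 1) ^ 2 + (A 2) ^ 2)))
        * ((if i = a then 1 else 0) - α * ∑ k, levicivita i k a * A k)) :
    ∀ A : Fin 3 → ℝ, ∀ i j a,
      ∑ l, (γt A j l * pd l (fun B => ρt B i a) A + ρt A l a * pd i (fun B => γt B j l) A)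
        = 0 := by
  intro A i j a
  have hD : (1 + α ^ 2 * (A 0 ^ 2 + A 1 ^ 2 + A 2 ^ 2)) ≠ 0 := by positivity
  have hρfun : ∀ i' a', (fun B => ρt B i' a') =
      fun B : Fin 3 → ℝ => 1 / (1 + α ^ 2 * (B 0 ^ 2 + B 1 ^ 2 + B 2 ^ 2)) *
        ((if i' = a' then 1 else 0) - α * (levicivita i' 0 a' * B 0
          + levicivita i' 1 a' * B 1 + levicivita i' 2 a' * B 2)) := by
    intro i' a'; funext B; rw [hρt, Fin.sum_univ_three]
  have hγfun : ∀ j' l', (fun B => γt B j' l') =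
      fun B : Fin 3 → ℝ => (if j' = l' then 1 else 0) - α * (levicivita j' 0 l' * B 0
          + levicivita j' 1 l' * B 1 + levicivita j' 2 l' * B 2) + α ^ 2 * B j' * B l' := by
    intro j' l'; funext B; rw [hγt, Fin.sum_univ_three]
  rw [Fin.sum_univ_three]
  simp only [hρfun, hγfun]
  rw [pd_rho, pd_rho, pd_rho, pd_gamma, pd_gamma, pd_gamma]
  simp only [hγt, hρt, Fin.sum_univ_three]
  field_simp
  fin_cases i <;> fin_cases j <;> fin_cases a <;>
    · norm_num [levicivita, Fin.ext_iff, show ((⟨2, by omega⟩ : Fin 3)) = 2 from rfl,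
        show ((⟨1, by omega⟩ : Fin 3)) = 1 from rfl, show ((⟨0, by omega⟩ : Fin 3)) = 0 from rfl]
      right
      ring
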